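/- Let A_1, ..., A_{n-1} be subsets of a field K each of size N, and let D be the grid of directions { <(a_1,...,a_{n-1},1)> : a_i \in A_i } in PG_{n-1}(K). Let g be a nonzero homogeneous polynomial in K[X_1,...,X_n] vanishing to multiplicity at least r at every point of D. Then deg g \geq rN. -/

import Mathlib

open MvPolynomial

/-- The multivariate Hasse derivative `∂^j`. -/
noncomputable def mvHasseDeriv {K : Type*} [CommSemiring K] {n : ℕ} (j : Fin n →₀ ℕ)
    (f : MvPolynomial (Fin n) K) : MvPolynomial (Fin n) K :=
  (AddMonoidAlgebra.coeff f).sum fun c a => monomial (c - j) (((∏ i ∈ j.support, (c i).choose (j i) : ℕ) : K) * a)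

section HasseBasic

variable {K : Type*} [CommSemiring K] {n : ℕ}

lemma mvHasseDeriv_monomial (j c : Fin n →₀ ℕ) (a : K) :
    mvHasseDeriv j (monomial c a)
      = monomial (c - j) (((∏ i, (c i).choose (j i) : ℕ) : K) * a) := by
  have h : (∏ i ∈ j.support, (c i).choose (j i)) = ∏ i, (c i).choose (j i) :=
    Finset.prod_subset (Finset.subset_univ _) (fun i _ hi => by
      rw [Finsupp.notMem_support_iff.mp hi, Nat.choose_zero_right])
  unfold mvHasseDeriv
  rw [sum_monomial_eq (by simp), h]

lemma mvHasseDeriv_add (j : Fin n →₀ ℕ) (f g : MvPolynomial (Fin n) K) :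
    mvHasseDeriv j (f + g) = mvHasseDeriv j f + mvHasseDeriv j g := by
  unfold mvHasseDeriv
  rw [AddMonoidAlgebra.coeff_add]
  exact Finsupp.sum_add_index' (fun c => by simp) (fun c a b => by rw [mul_add, map_add])

lemma mvHasseDeriv_zero (f : MvPolynomial (Fin n) K) : mvHasseDeriv 0 f = f := by
  unfold mvHasseDeriv
  conv_rhs => rw [f.as_sum]
  rw [Finsupp.sum]
  refine Finset.sum_congr rfl fun c _ => ?_
  simp [coeff]

lemma mvHasseDeriv_zero_poly (j : Fin n →₀ ℕ) :
    mvHasseDeriv j (0 : MvPolynomial (Fin n) K) = 0 := by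
  unfold mvHasseDeriv
  rw [AddMonoidAlgebra.coeff_zero]
  exact Finsupp.sum_zero_index

end HasseBasic

section Uni

variable {K : Type*} [Field K]

lemma X_sub_C_pow_dvd_of_hasse {ρ : ℕ} {u : Polynomial K} {b : K}
    (h : ∀ k < ρ, (Polynomial.hasseDeriv k u).eval b = 0) :
    (Polynomial.X - Polynomial.C b) ^ ρ ∣ u := by
  have h1 : (Polynomial.X : Polynomial K) ^ ρ ∣ Polynomial.taylor b u := by
    rw [Polynomial.X_pow_dvd_iff]
    intro d hd; rw [Polynomial.taylor_coeff]; exact h d hd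
  obtain ⟨v, hv⟩ := h1
  refine ⟨v.comp (Polynomial.X - Polynomial.C b), ?_⟩
  have h2 := congrArg (fun p => Polynomial.comp p (Polynomial.X - Polynomial.C b)) hv
  simp only [Polynomial.taylor_apply] at h2
  rw [Polynomial.comp_assoc, Polynomial.add_comp, Polynomial.X_comp, Polynomial.C_comp,
    sub_add_cancel, Polynomial.comp_X, Polynomial.mul_comp, Polynomial.X_pow_comp] at h2
  exact h2

lemma uni_vanish_eq_zero {ρ N : ℕ} {A0 : Finset K} (hA : A0.card = N)
    {u : Polynomial K} (hvan : ∀ b ∈ A0, ∀ k < ρ, (Polynomial.hasseDeriv k u).eval b = 0)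
    (hdeg : u.natDegree < ρ * N) : u = 0 := by
  by_contra hu
  have hdvd : (∏ b ∈ A0, (Polynomial.X - Polynomial.C b) ^ ρ) ∣ u := by
    refine Finset.prod_dvd_of_coprime ?_ (fun b hb => X_sub_C_pow_dvd_of_hasse (hvan b hb))
    intro b hb b' hb' hne
    exact ((Polynomial.pairwise_coprime_X_sub_C (Function.injective_id (α := K)) hne).pow)
  have hnd : (∏ b ∈ A0, (Polynomial.X - Polynomial.C b) ^ ρ).natDegree = ρ * N := by
    rw [Polynomial.natDegree_prod _ _ (fun b _ => pow_ne_zero _ (Polynomial.X_sub_C_ne_zero b))]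
    simp [Polynomial.natDegree_pow, hA, mul_comm]
  exact hu (Polynomial.eq_zero_of_dvd_of_natDegree_lt hdvd (by rw [hnd]; exact hdeg))

end Uni

section Bridge

variable {K : Type*} [CommSemiring K] {m : ℕ}

/-- Map the coefficients of a polynomial by an additive map. -/
noncomputable def polyMapCoeffs {R S : Type*} [Semiring R] [Semiring S] (L : R →+ S)
    (p : Polynomial R) : Polynomial S :=
  ⟨⟨Finsupp.mapRange L L.map_zero p.toFinsupp.coeff⟩⟩

lemma polyMapCoeffs_coeff {R S : Type*} [Semiring R] [Semiring S] (L : R →+ S)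
    (p : Polynomial R) (k : ℕ) : (polyMapCoeffs L p).coeff k = L (p.coeff k) := rfl

lemma polyMapCoeffs_add {R S : Type*} [Semiring R] [Semiring S] (L : R →+ S)
    (p q : Polynomial R) : polyMapCoeffs L (p + q) = polyMapCoeffs L p + polyMapCoeffs L q := by
  ext k; simp [polyMapCoeffs_coeff]

lemma polyMapCoeffs_monomial {R S : Type*} [Semiring R] [Semiring S] (L : R →+ S)
    (k : ℕ) (a : R) :
    polyMapCoeffs L (Polynomial.monomial k a) = Polynomial.monomial k (L a) := by
  ext d; simp [polyMapCoeffs_coeff, Polynomial.coeff_monomial]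
  split <;> simp

lemma polyMapCoeffs_natDegree_le {R S : Type*} [Semiring R] [Semiring S] (L : R →+ S)
    (p : Polynomial R) : (polyMapCoeffs L p).natDegree ≤ p.natDegree := by
  apply Polynomial.natDegree_le_iff_coeff_eq_zero.mpr
  intro d hd
  rw [polyMapCoeffs_coeff, Polynomial.coeff_eq_zero_of_natDegree_lt hd, map_zero]

/-- The evaluate-a-Hasse-derivative additive map. -/
noncomputable def hasseEvalHom (j : Fin m →₀ ℕ) (a : Fin m → K) :
    MvPolynomial (Fin m) K →+ K :=
  { toFun := fun q => eval a (mvHasseDeriv j q)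
    map_zero' := by show eval a (mvHasseDeriv j 0) = 0; rw [mvHasseDeriv_zero_poly, map_zero]
    map_add' := fun p q => by
      show eval a (mvHasseDeriv j (p + q)) = eval a (mvHasseDeriv j p) + eval a (mvHasseDeriv j q)
      rw [mvHasseDeriv_add, map_add] }

@[simp] lemma hasseEvalHom_apply (j : Fin m →₀ ℕ) (a : Fin m → K) (q : MvPolynomial (Fin m) K) :
    hasseEvalHom j a q = eval a (mvHasseDeriv j q) := rfl

lemma finSuccEquiv_monomial (c : Fin (m + 1) →₀ ℕ) (a : K) :
    finSuccEquiv K m (monomial c a)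
      = Polynomial.monomial (c 0) (monomial (Finsupp.tail c) a) := by
  apply Polynomial.ext; intro i
  apply MvPolynomial.ext; intro d
  rw [finSuccEquiv_coeff_coeff, coeff_monomial, Polynomial.coeff_monomial]
  by_cases hi : c 0 = i
  · subst hi
    rw [if_pos rfl, coeff_monomial]
    by_cases hd : Finsupp.tail c = d
    · rw [if_pos hd, if_pos (by rw [← hd, Finsupp.cons_tail])]
    · rw [if_neg hd, if_neg]
      intro hcon
      exact hd (by rw [hcon, Finsupp.tail_cons])
  · rw [if_neg hi, coeff_zero, if_neg]
    intro hcon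
    exact hi (by rw [hcon, Finsupp.cons_zero])

lemma bridge (f : MvPolynomial (Fin (m + 1)) K) (a : Fin m → K) (j' : Fin m →₀ ℕ)
    (j₀ : ℕ) (b : K) :
    Polynomial.eval b (Polynomial.hasseDeriv j₀
        (polyMapCoeffs (hasseEvalHom j' a) (finSuccEquiv K m f)))
      = eval (Fin.cons b a) (mvHasseDeriv (Finsupp.cons j₀ j') f) := by
  induction f using MvPolynomial.induction_on' with
  | add p q hp hq =>
      rw [map_add, polyMapCoeffs_add, map_add, Polynomial.eval_add, hp, hq,
        mvHasseDeriv_add, map_add]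
  | monomial c α =>
      rw [finSuccEquiv_monomial, polyMapCoeffs_monomial, Polynomial.hasseDeriv_monomial,
        Polynomial.eval_monomial, mvHasseDeriv_monomial, eval_monomial]
      rw [hasseEvalHom_apply, mvHasseDeriv_monomial, eval_monomial]
      rw [Finsupp.prod_fintype _ _ (fun i => pow_zero _),
        Finsupp.prod_fintype _ _ (fun i => pow_zero _)]
      rw [Fin.prod_univ_succ (f := fun i => (Fin.cons b a : Fin (m+1) → K) i
            ^ ((c - Finsupp.cons j₀ j') i)),
        Fin.prod_univ_succ (f := fun i => ((c i).choose ((Finsupp.cons j₀ j' : Fin (m+1) →₀ ℕ) i)))]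
      simp only [Finsupp.cons_zero, Finsupp.cons_succ, Fin.cons_zero, Fin.cons_succ,
        Finsupp.tsub_apply, Finsupp.tail_apply]
      push_cast
      ring

end Bridge

lemma affine_lemma {K : Type*} [Field K] :
    ∀ (m N r : ℕ) (A : Fin m → Finset K), (∀ i, (A i).card = N) →
    ∀ f : MvPolynomial (Fin m) K, f ≠ 0 →
    (∀ a : Fin m → K, (∀ i, a i ∈ A i) →
      ∀ j : Fin m →₀ ℕ, (∑ i, j i) < r → eval a (mvHasseDeriv j f) = 0) →
    r * N ≤ f.totalDegree := by
  intro m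
  induction m with
  | zero =>
    intro N r A hA f hf hvan
    rcases Nat.eq_zero_or_pos r with hr | hr
    · simp [hr]
    exfalso
    have h0 := hvan Fin.elim0 (fun i => i.elim0) 0 (by simpa using hr)
    rw [mvHasseDeriv_zero] at h0
    obtain ⟨x, rfl⟩ := MvPolynomial.C_surjective (Fin 0) f
    rw [eval_C] at h0
    exact hf (by rw [h0, map_zero])
  | succ m IH =>
    intro N r A hA f hf hvan
    rcases Nat.eq_zero_or_pos r with hr | hr
    · simp [hr]
    rcases Nat.eq_zero_or_pos N with hN | hN
    · simp [hN]
    set p := finSuccEquiv K m f with hp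
    set t := p.natDegree with ht
    have htle : t ≤ f.totalDegree := by
      rw [ht, hp, natDegree_finSuccEquiv]; exact degreeOf_le_totalDegree f 0
    set s := t / N with hs
    by_cases hrs : r ≤ s
    · calc r * N ≤ s * N := Nat.mul_le_mul_right _ hrs
        _ ≤ t := Nat.div_mul_le_self t N
        _ ≤ _ := htle
    push_neg at hrs
    have hp0 : p ≠ 0 := fun h =>
      hf (by simpa using (finSuccEquiv K m).injective (h.trans (map_zero _).symm))
    have hq0 : p.coeff t ≠ 0 := by
      rw [ht]; exact Polynomial.leadingCoeff_ne_zero.mpr hp0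
    have hvan' : ∀ a : Fin m → K, (∀ i, a i ∈ A i.succ) →
        ∀ j' : Fin m →₀ ℕ, (∑ i, j' i) < r - s →
        eval a (mvHasseDeriv j' (p.coeff t)) = 0 := by
      intro a ha j' hj'
      have hu : polyMapCoeffs (hasseEvalHom j' a) p = 0 := by
        apply uni_vanish_eq_zero (hA 0) (ρ := s + 1)
        · intro b hb k hk
          rw [hp, bridge]
          apply hvan (Fin.cons b a)
          · intro i
            refine Fin.cases ?_ ?_ i
            · simpa using hb
            · intro i'; simpa using ha i'
          · rw [Fin.sum_univ_succ]
            simp only [Finsupp.cons_zero, Finsupp.cons_succ]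
            omega
        · refine lt_of_le_of_lt (polyMapCoeffs_natDegree_le _ _) ?_
          calc t = N * s + t % N := by rw [hs]; exact (Nat.div_add_mod t N).symm
            _ < N * s + N := Nat.add_lt_add_left (Nat.mod_lt t hN) _
            _ = (s + 1) * N := by ring
      have h2 := congrArg (fun u => Polynomial.coeff u t) hu
      simpa [polyMapCoeffs_coeff] using h2
    have hIH := IH N (r - s) (fun i => A i.succ) (fun i => hA i.succ) (p.coeff t) hq0 hvan'
    have hfin : (p.coeff t).totalDegree + t ≤ f.totalDegree :=
      totalDegree_coeff_finSuccEquiv_add_le f t hq0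
    have hsN : s * N ≤ t := Nat.div_mul_le_self t N
    calc r * N = (r - s) * N + s * N := by
          rw [← add_mul, Nat.sub_add_cancel (le_of_lt hrs)]
      _ ≤ (p.coeff t).totalDegree + t := add_le_add hIH hsN
      _ ≤ f.totalDegree := hfin

section Dehom

variable {K : Type*} [CommSemiring K] {m : ℕ}

/-- Restriction of an exponent vector to the first `m` coordinates. -/
noncomputable def frontF (c : Fin (m + 1) →₀ ℕ) : Fin m →₀ ℕ :=
  Finsupp.equivFunOnFinite.symm (fun i => c i.castSucc)

@[simp] lemma frontF_apply (c : Fin (m + 1) →₀ ℕ) (i : Fin m) :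
    frontF c i = c i.castSucc := rfl

/-- Extension of an exponent vector by `0` in the last coordinate. -/
noncomputable def snocF (j : Fin m →₀ ℕ) : Fin (m + 1) →₀ ℕ :=
  Finsupp.equivFunOnFinite.symm (Fin.snoc j 0)

@[simp] lemma snocF_castSucc (j : Fin m →₀ ℕ) (i : Fin m) :
    snocF j i.castSucc = j i := by
  show (Fin.snoc (⇑j) 0 : Fin (m+1) → ℕ) i.castSucc = j i
  simp

@[simp] lemma snocF_last (j : Fin m →₀ ℕ) : snocF j (Fin.last m) = 0 := by
  show (Fin.snoc (⇑j) 0 : Fin (m+1) → ℕ) (Fin.last m) = 0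
  simp

lemma sum_snocF (j : Fin m →₀ ℕ) : (∑ i, snocF j i) = ∑ i, j i := by
  rw [Fin.sum_univ_castSucc]
  simp

lemma dehom_monomial (c : Fin (m + 1) →₀ ℕ) (α : K) :
    aeval (Fin.snoc (fun i => X i) (1 : MvPolynomial (Fin m) K)) (monomial c α)
      = monomial (frontF c) α := by
  rw [aeval_monomial, monomial_eq,
    Finsupp.prod_fintype _ _ (fun i => pow_zero _),
    Finsupp.prod_fintype _ _ (fun i => pow_zero _),
    Fin.prod_univ_castSucc]
  simp [algebraMap_eq]

lemma dehom_hasse (g : MvPolynomial (Fin (m + 1)) K) (a : Fin m → K) (j : Fin m →₀ ℕ) :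
    eval a (mvHasseDeriv j (aeval (Fin.snoc (fun i => X i) 1) g))
      = eval (Fin.snoc a 1) (mvHasseDeriv (snocF j) g) := by
  induction g using MvPolynomial.induction_on' with
  | add p q hp hq => rw [map_add, mvHasseDeriv_add, map_add, hp, hq, mvHasseDeriv_add, map_add]
  | monomial c α =>
      rw [dehom_monomial, mvHasseDeriv_monomial, mvHasseDeriv_monomial,
        eval_monomial, eval_monomial,
        Finsupp.prod_fintype _ _ (fun i => pow_zero _),
        Finsupp.prod_fintype _ _ (fun i => pow_zero _),
        Fin.prod_univ_castSucc (f := fun i => (Fin.snoc a 1 : Fin (m+1) → K) i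
          ^ ((c - snocF j) i)),
        Fin.prod_univ_castSucc (f := fun i => ((c i).choose (snocF j i)))]
      simp only [Finsupp.tsub_apply, frontF_apply, snocF_castSucc, snocF_last,
        Fin.snoc_castSucc, Fin.snoc_last, Nat.choose_zero_right, one_pow, mul_one]

end Dehom

/-- A nonzero homogeneous polynomial in `m + 1` variables vanishing to multiplicity at least
`r` at every point `⟨(a_1, …, a_m, 1)⟩` of an `N^m` grid of directions has degree `≥ rN`. -/
theorem homogeneous_vanishing_on_grid_degree_bound {K : Type*} [Field K] {m N r d : ℕ}
    (A : Fin m → Finset K) (hA : ∀ i, (A i).card = N)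
    (g : MvPolynomial (Fin (m + 1)) K) (hg0 : g ≠ 0) (hgh : g.IsHomogeneous d)
    (hvan : ∀ a : Fin m → K, (∀ i, a i ∈ A i) →
      ∀ j : Fin (m + 1) →₀ ℕ, (∑ i, j i) < r →
        eval (Fin.snoc a (1 : K)) (mvHasseDeriv j g) = 0) :
    r * N ≤ g.totalDegree := by
  classical
  set f : MvPolynomial (Fin m) K :=
    aeval (Fin.snoc (fun i => X i) (1 : MvPolynomial (Fin m) K)) g with hfdef
  have hsupp : ∀ b ∈ g.support, (∑ i, b i) = d := by
    intro b hb
    have h1 := hgh (MvPolynomial.mem_support_iff.mp hb)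
    rw [show (1 : Fin (m+1) → ℕ) = fun _ => 1 from rfl, ← Finsupp.degree_eq_weight_one] at h1
    rw [← h1, Finsupp.degree]
    exact (Finset.sum_subset (Finset.subset_univ _)
      (fun i _ hi => Finsupp.notMem_support_iff.mp hi)).symm
  obtain ⟨c, hc⟩ := MvPolynomial.support_nonempty.mpr hg0
  have hfrep : f = ∑ b ∈ g.support, monomial (frontF b) (coeff b g) := by
    rw [hfdef]
    conv_lhs => rw [g.as_sum]
    rw [map_sum]
    exact Finset.sum_congr rfl fun b _ => dehom_monomial b (coeff b g)
  have hfc : coeff (frontF c) f = coeff c g := by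
    rw [hfrep, coeff_sum]
    rw [Finset.sum_eq_single c (fun b hb hbc => ?_) (fun hcc => absurd hc hcc)]
    · rw [coeff_monomial, if_pos rfl]
    · rw [coeff_monomial, if_neg]
      intro hfb
      apply hbc
      have hlast : b (Fin.last m) = c (Fin.last m) := by
        have hbsum := hsupp b hb
        have hcsum := hsupp c hc
        rw [Fin.sum_univ_castSucc] at hbsum hcsum
        have hfront : (∑ i : Fin m, b i.castSucc) = ∑ i : Fin m, c i.castSucc := by
          refine Finset.sum_congr rfl fun i _ => ?_
          have := congrArg (fun v => v i) hfb
          simpa using this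
        omega
      ext i
      refine Fin.lastCases hlast (fun i' => ?_) i
      have := congrArg (fun v => v i') hfb
      simpa using this
  have hf0 : f ≠ 0 := by
    intro h
    rw [h, coeff_zero] at hfc
    exact MvPolynomial.mem_support_iff.mp hc hfc.symm
  have hdeg : f.totalDegree ≤ g.totalDegree := by
    rw [hgh.totalDegree hg0, hfrep]
    refine (totalDegree_finset_sum _ _).trans (Finset.sup_le fun b hb => ?_)
    refine (totalDegree_monomial_le _ _).trans ?_
    rw [Finsupp.sum_fintype _ _ (fun i => rfl)]
    calc (∑ i : Fin m, frontF b i) ≤ ∑ i : Fin (m+1), b i := by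
          rw [Fin.sum_univ_castSucc]
          simp
        _ = d := hsupp b hb
  have hvan' : ∀ a : Fin m → K, (∀ i, a i ∈ A i) →
      ∀ j : Fin m →₀ ℕ, (∑ i, j i) < r → eval a (mvHasseDeriv j f) = 0 := by
    intro a ha j hj
    rw [hfdef, dehom_hasse]
    exact hvan a ha (snocF j) (by rw [sum_snocF]; exact hj)
  exact (affine_lemma m N r A hA f hf0 hvan').trans hdeg
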